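/- arXiv:2402.01085 — 7 statements merged into one kernel-verified Lean document; each statement's English description precedes it below -/
import Mathlib

section
/- For any m real skew-symmetric 3×3 matrices B₁,…,B_m, one has ∑_{r,s=1}^m ‖[B_r,B_s]‖² ≤ (1/3)(∑_{r=1}^m ‖B_r‖²)². -/
open Matrix

lemma tr1 (A : Matrix (Fin 3) (Fin 3) ℝ) (h : Aᵀ = -A) :
    trace (A * Aᵀ) = 2*((A 0 1)^2+(A 0 2)^2+(A 1 2)^2) := by
  have h' : ∀ i j, A j i = -A i j := fun i j => by
    have := congrFun (congrFun h i) j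
    simpa [Matrix.transpose_apply, Matrix.neg_apply] using this
  have h00 : A 0 0 = 0 := by have := h' 0 0; linarith
  have h11 : A 1 1 = 0 := by have := h' 1 1; linarith
  have h22 : A 2 2 = 0 := by have := h' 2 2; linarith
  simp only [Matrix.trace_fin_three, Matrix.mul_apply, Fin.sum_univ_three, Matrix.transpose_apply]
  rw [h' 0 1, h' 0 2, h' 1 2, h00, h11, h22]
  ring

lemma tr2 (A C : Matrix (Fin 3) (Fin 3) ℝ) (hA : Aᵀ = -A) (hC : Cᵀ = -C) :
    trace ((A*C - C*A) * (A*C - C*A)ᵀ) =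
      2*(((A 0 1)^2+(A 0 2)^2+(A 1 2)^2)*((C 0 1)^2+(C 0 2)^2+(C 1 2)^2)
        - (A 0 1*C 0 1 + A 0 2*C 0 2 + A 1 2*C 1 2)^2) := by
  have hA' : ∀ i j, A j i = -A i j := fun i j => by
    have := congrFun (congrFun hA i) j
    simpa [Matrix.transpose_apply, Matrix.neg_apply] using this
  have hC' : ∀ i j, C j i = -C i j := fun i j => by
    have := congrFun (congrFun hC i) j
    simpa [Matrix.transpose_apply, Matrix.neg_apply] using this
  have hA00 : A 0 0 = 0 := by have := hA' 0 0; linarith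
  have hA11 : A 1 1 = 0 := by have := hA' 1 1; linarith
  have hA22 : A 2 2 = 0 := by have := hA' 2 2; linarith
  have hC00 : C 0 0 = 0 := by have := hC' 0 0; linarith
  have hC11 : C 1 1 = 0 := by have := hC' 1 1; linarith
  have hC22 : C 2 2 = 0 := by have := hC' 2 2; linarith
  simp only [Matrix.trace_fin_three, Matrix.mul_apply, Matrix.sub_apply, Fin.sum_univ_three,
    Matrix.transpose_apply]
  rw [hA' 0 1, hA' 0 2, hA' 1 2, hA00, hA11, hA22, hC' 0 1, hC' 0 2, hC' 1 2, hC00, hC11, hC22]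
  ring

lemma key (m : ℕ) (p q u : Fin m → ℝ) :
    (∑ r, (p r^2+q r^2+u r^2))^2 ≤ 3 * ∑ r, ∑ s, (p r*p s+q r*q s+u r*u s)^2 := by
  have hT : ∑ r, ∑ s, (p r*p s+q r*q s+u r*u s)^2
      = (∑ r, p r^2)^2 + (∑ r, q r^2)^2 + (∑ r, u r^2)^2
        + 2*(∑ r, p r*q r)^2 + 2*(∑ r, p r*u r)^2 + 2*(∑ r, q r*u r)^2 := by
    have h : ∀ r s : Fin m, (p r*p s+q r*q s+u r*u s)^2
        = (p r^2)*(p s^2)+(q r^2)*(q s^2)+(u r^2)*(u s^2)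
          + 2*((p r*q r)*(p s*q s))+2*((p r*u r)*(p s*u s))+2*((q r*u r)*(q s*u s)) := by
      intros; ring
    simp_rw [h, Finset.sum_add_distrib, ← Finset.mul_sum, ← Finset.sum_mul, sq]
  rw [hT]
  have hS : (∑ r, (p r^2+q r^2+u r^2)) = (∑ r, p r^2) + (∑ r, q r^2) + (∑ r, u r^2) := by
    rw [Finset.sum_add_distrib, Finset.sum_add_distrib]
  rw [hS]
  set A := ∑ r, p r^2; set B := ∑ r, q r^2; set C := ∑ r, u r^2
  nlinarith [sq_nonneg (A-B), sq_nonneg (B-C), sq_nonneg (A-C),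
    sq_nonneg (∑ r, p r*q r), sq_nonneg (∑ r, p r*u r), sq_nonneg (∑ r, q r*u r)]

/-- DDVV-type inequality for real skew-symmetric 3×3 matrices. -/
theorem ddvv_skew_three (m : ℕ) (B : Fin m → Matrix (Fin 3) (Fin 3) ℝ)
    (hskew : ∀ r, (B r)ᵀ = -(B r)) :
    ∑ r, ∑ s, trace ((B r * B s - B s * B r) * (B r * B s - B s * B r)ᵀ) ≤
      (1 / 3) * (∑ r, trace (B r * (B r)ᵀ)) ^ 2 := by
  have h1 : ∀ r, trace (B r * (B r)ᵀ)
      = 2*((B r 0 1)^2+(B r 0 2)^2+(B r 1 2)^2) := fun r => tr1 _ (hskew r)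
  have h2 : ∀ r s, trace ((B r * B s - B s * B r) * (B r * B s - B s * B r)ᵀ)
      = 2*(((B r 0 1)^2+(B r 0 2)^2+(B r 1 2)^2)*((B s 0 1)^2+(B s 0 2)^2+(B s 1 2)^2)
        - (B r 0 1*B s 0 1 + B r 0 2*B s 0 2 + B r 1 2*B s 1 2)^2) :=
    fun r s => tr2 _ _ (hskew r) (hskew s)
  simp_rw [h1, h2]
  set p : Fin m → ℝ := fun r => B r 0 1
  set q : Fin m → ℝ := fun r => B r 0 2
  set u : Fin m → ℝ := fun r => B r 1 2
  have hkey := key m p q u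
  have hL : ∑ r, ∑ s, 2*((p r^2+q r^2+u r^2)*(p s^2+q s^2+u s^2)
        - (p r*p s+q r*q s+u r*u s)^2)
      = 2*((∑ r, (p r^2+q r^2+u r^2))^2 - ∑ r, ∑ s, (p r*p s+q r*q s+u r*u s)^2) := by
    have h : ∀ r s : Fin m, 2*((p r^2+q r^2+u r^2)*(p s^2+q s^2+u s^2)
        - (p r*p s+q r*q s+u r*u s)^2)
        = 2*((p r^2+q r^2+u r^2)*(p s^2+q s^2+u s^2)) - 2*(p r*p s+q r*q s+u r*u s)^2 := by
      intros; ring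
    simp_rw [h, Finset.sum_sub_distrib, ← Finset.mul_sum, ← Finset.sum_mul, sq]
    ring
  have hR : (∑ r, 2*(p r^2+q r^2+u r^2)) = 2*∑ r, (p r^2+q r^2+u r^2) := by
    rw [Finset.mul_sum]
  rw [hL, hR]
  nlinarith [hkey]
end

section
/- For any two Hermitian n×n complex matrices B₁, B₂ (n ≥ 2), one has ∑_{r,s=1}^2 ‖[B_r,B_s]‖² ≤ (‖B₁‖² + ‖B₂‖²)². -/
open Matrix

noncomputable def frob {n : ℕ} (X : Matrix (Fin n) (Fin n) ℂ) : ℝ :=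
  (trace (X * Xᴴ)).re

lemma frob_eq {n : ℕ} (X : Matrix (Fin n) (Fin n) ℂ) :
    frob X = ∑ i, ∑ j, Complex.normSq (X i j) := by
  simp [frob, trace, Matrix.mul_apply, Matrix.conjTranspose_apply, Matrix.diag,
    Complex.mul_conj, Complex.re_sum]

lemma frob_nonneg {n : ℕ} (X : Matrix (Fin n) (Fin n) ℂ) : 0 ≤ frob X := by
  rw [frob_eq]
  apply Finset.sum_nonneg; intro i _
  apply Finset.sum_nonneg; intro j _
  exact Complex.normSq_nonneg _

lemma frob_conj {n : ℕ} (U X : Matrix (Fin n) (Fin n) ℂ)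
    (hU : U ∈ Matrix.unitaryGroup (Fin n) ℂ) : frob (U * X * star U) = frob X := by
  have h1 : star U * U = 1 := hU.1
  unfold frob
  congr 1
  have key : (U * X * star U) * (U * X * star U)ᴴ = U * (X * Xᴴ) * star U := by
    simp only [conjTranspose_mul, conjTranspose_conjTranspose, star_eq_conjTranspose, mul_assoc]
    rw [show Uᴴ * (U * (Xᴴ * Uᴴ)) = Xᴴ * Uᴴ by
      rw [← mul_assoc, show Uᴴ * U = 1 from h1, one_mul]]
  rw [key, Matrix.trace_mul_cycle, ← mul_assoc, show (star U) * U = 1 from h1, one_mul]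

lemma conj_mul_conj {n : ℕ} (U X Y : Matrix (Fin n) (Fin n) ℂ)
    (h1 : star U * U = 1) :
    (U * X * star U) * (U * Y * star U) = U * (X * Y) * star U := by
  simp only [mul_assoc]
  rw [show star U * (U * (Y * star U)) = Y * star U by
    rw [← mul_assoc, h1, one_mul]]

lemma bw_hermitian {n : ℕ} (A M : Matrix (Fin n) (Fin n) ℂ) (hA : Aᴴ = A) :
    frob (A * M - M * A) ≤ 2 * frob A * frob M := by
  have hA' : A.IsHermitian := hA
  set U : Matrix (Fin n) (Fin n) ℂ := (hA'.eigenvectorUnitary : Matrix (Fin n) (Fin n) ℂ)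
    with hUdef
  have hU : U ∈ Matrix.unitaryGroup (Fin n) ℂ := (hA'.eigenvectorUnitary).2
  have h1 : star U * U = 1 := hU.1
  have h2 : U * star U = 1 := hU.2
  set lam : Fin n → ℝ := hA'.eigenvalues with hlam
  set D : Matrix (Fin n) (Fin n) ℂ := diagonal (fun i => (lam i : ℂ)) with hD
  have hspec : A = U * D * star U := by
    have := hA'.spectral_theorem
    rw [Unitary.conjStarAlgAut_apply] at this
    exact this
  set B' : Matrix (Fin n) (Fin n) ℂ := star U * M * U with hB'
  have hM : M = U * B' * star U := by
    rw [hB']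
    simp only [mul_assoc]
    rw [show U * (star U * (M * (U * star U))) = U * (star U * M) by rw [h2, mul_one],
      ← mul_assoc, h2, one_mul]
  have hcomm : A * M - M * A = U * (D * B' - B' * D) * star U := by
    rw [hspec, hM, conj_mul_conj _ _ _ h1, conj_mul_conj _ _ _ h1, ← sub_mul, ← mul_sub]
  have hfc : frob (A * M - M * A) = frob (D * B' - B' * D) := by
    rw [hcomm, frob_conj _ _ hU]
  have hfA : frob A = ∑ i, lam i ^ 2 := by
    rw [hspec, frob_conj _ _ hU, frob_eq]
    simp [hD, diagonal_apply, apply_ite Complex.normSq, Complex.normSq_ofReal, sq,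
      Finset.sum_ite_eq, Finset.sum_ite_eq']
  have hfM : frob M = frob B' := by rw [hM, frob_conj _ _ hU]
  set S : ℝ := ∑ i, lam i ^ 2 with hS
  have hSnn : 0 ≤ S := Finset.sum_nonneg fun i _ => sq_nonneg _
  rw [hfc, hfA, hfM, frob_eq, frob_eq]
  have entry : ∀ i j, Complex.normSq ((D * B' - B' * D) i j)
      = (lam i - lam j) ^ 2 * Complex.normSq (B' i j) := by
    intro i j
    have : (D * B' - B' * D) i j = ((lam i - lam j : ℝ) : ℂ) * B' i j := by
      simp [hD, Matrix.sub_apply, Matrix.diagonal_mul, Matrix.mul_diagonal]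
      ring
    rw [this, Complex.normSq_mul, Complex.normSq_ofReal, sq]
  calc ∑ i, ∑ j, Complex.normSq ((D * B' - B' * D) i j)
      ≤ ∑ i, ∑ j, 2 * S * Complex.normSq (B' i j) := by
        apply Finset.sum_le_sum; intro i _
        apply Finset.sum_le_sum; intro j _
        rw [entry i j]
        by_cases hij : i = j
        · subst hij
          simp only [sub_self, ne_eq, OfNat.ofNat_ne_zero, not_false_eq_true, zero_pow, zero_mul]
          exact mul_nonneg (mul_nonneg (by norm_num) hSnn) (Complex.normSq_nonneg _)
        · apply mul_le_mul_of_nonneg_right _ (Complex.normSq_nonneg _)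
          have hpair : lam i ^ 2 + lam j ^ 2 ≤ S := by
            calc lam i ^ 2 + lam j ^ 2 = ∑ k ∈ ({i, j} : Finset (Fin n)), lam k ^ 2 :=
                  (Finset.sum_pair (f := fun k => lam k ^ 2) hij).symm
              _ ≤ S := Finset.sum_le_sum_of_subset_of_nonneg (Finset.subset_univ _)
                  (fun k _ _ => sq_nonneg _)
          nlinarith [sq_nonneg (lam i + lam j)]
    _ = 2 * S * ∑ i, ∑ j, Complex.normSq (B' i j) := by
        simp [Finset.mul_sum]

/-- DDVV-type inequality for two Hermitian matrices. -/
theorem ddvv_hermitian_two (n : ℕ) (hn : 2 ≤ n)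
    (B : Fin 2 → Matrix (Fin n) (Fin n) ℂ) (hherm : ∀ r, (B r)ᴴ = B r) :
    ∑ r, ∑ s, (trace ((B r * B s - B s * B r) * (B r * B s - B s * B r)ᴴ)).re ≤
      ((trace (B 0 * (B 0)ᴴ)).re + (trace (B 1 * (B 1)ᴴ)).re) ^ 2 := by
  have key := bw_hermitian (B 0) (B 1) (hherm 0)
  have hflip : frob (B 1 * B 0 - B 0 * B 1) = frob (B 0 * B 1 - B 1 * B 0) := by
    have h : B 1 * B 0 - B 0 * B 1 = -(B 0 * B 1 - B 1 * B 0) := by abel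
    rw [h]
    unfold frob
    rw [show (-(B 0 * B 1 - B 1 * B 0)) * (-(B 0 * B 1 - B 1 * B 0))ᴴ
        = (B 0 * B 1 - B 1 * B 0) * (B 0 * B 1 - B 1 * B 0)ᴴ by
      simp only [conjTranspose_neg, neg_mul_neg]]
  have a_nn := frob_nonneg (B 0)
  have b_nn := frob_nonneg (B 1)
  simp only [Fin.sum_univ_two]
  show frob (B 0 * B 0 - B 0 * B 0) + frob (B 0 * B 1 - B 1 * B 0)
      + (frob (B 1 * B 0 - B 0 * B 1) + frob (B 1 * B 1 - B 1 * B 1))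
      ≤ (frob (B 0) + frob (B 1)) ^ 2
  rw [sub_self, sub_self]
  have frob0 : frob (0 : Matrix (Fin n) (Fin n) ℂ) = 0 := by simp [frob]
  rw [frob0]
  nlinarith [key, hflip, a_nn, b_nn, sq_nonneg (frob (B 0) - frob (B 1))]
end

section
/- Let P₀,…,P_m be real symmetric orthogonal 2l×2l matrices forming a Clifford system, i.e., P_iP_j + P_jP_i = 2δ_{ij}I_{2l}. If B₁,…,B_M are real linear combinations of P₀,…,P_m, then ∑_{r,s=1}^M ‖[B_r,B_s]‖² ≤ (2/l)(1 - 1/N)(∑_{r=1}^M ‖B_r‖²)², where N = min(m+1, M). -/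
open Matrix

set_option maxHeartbeats 1000000

private lemma ddvv_comm_sq {n : ℕ} (X Y : Matrix (Fin n) (Fin n) ℝ) (α β γ : ℝ)
    (hX : Xᵀ = X) (hY : Yᵀ = Y) (hXX : X * X = α • 1) (hYY : Y * Y = β • 1)
    (hXY : X * Y + Y * X = (2 * γ) • 1) :
    (X * Y - Y * X) * (X * Y - Y * X)ᵀ = (4 * (α * β - γ ^ 2)) • 1 := by
  have ht : (X * Y - Y * X)ᵀ = Y * X - X * Y := by
    simp [transpose_sub, transpose_mul, hX, hY]
  rw [ht]
  have T1 : (X * Y) * (Y * X) = (α * β) • 1 := by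
    calc (X * Y) * (Y * X) = X * (Y * Y) * X := by noncomm_ring
    _ = (α * β) • 1 := by
      rw [hYY, mul_smul_comm, mul_one, smul_mul_assoc, hXX, smul_smul, mul_comm]
  have T4 : (Y * X) * (X * Y) = (α * β) • 1 := by
    calc (Y * X) * (X * Y) = Y * (X * X) * Y := by noncomm_ring
    _ = (α * β) • 1 := by
      rw [hXX, mul_smul_comm, mul_one, smul_mul_assoc, hYY, smul_smul]
  have T2 : (X * Y) * (X * Y) = (2 * γ) • (X * Y) - (α * β) • 1 := by
    have h0 : (X * Y) * (X * Y) = X * (Y * X) * Y := by noncomm_ring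
    rw [h0]
    have hYX : Y * X = (2 * γ) • 1 - X * Y := by
      rw [eq_sub_iff_add_eq, add_comm]; exact hXY
    rw [hYX, mul_sub, sub_mul, mul_smul_comm, mul_one, smul_mul_assoc]
    congr 1
    calc X * (X * Y) * Y = X * X * (Y * Y) := by noncomm_ring
    _ = (α * β) • 1 := by rw [hXX, hYY, smul_mul_assoc, mul_smul_comm, one_mul, smul_smul]
  have T3 : (Y * X) * (Y * X) = (2 * γ) • (Y * X) - (α * β) • 1 := by
    have h0 : (Y * X) * (Y * X) = Y * (X * Y) * X := by noncomm_ring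
    rw [h0]
    have hXY' : X * Y = (2 * γ) • 1 - Y * X := by
      rw [eq_sub_iff_add_eq]; exact hXY
    rw [hXY', mul_sub, sub_mul, mul_smul_comm, mul_one, smul_mul_assoc]
    congr 1
    calc Y * (Y * X) * X = Y * Y * (X * X) := by noncomm_ring
    _ = (α * β) • 1 := by
      rw [hXX, hYY, smul_mul_assoc, mul_smul_comm, one_mul, smul_smul, mul_comm]
  have expand : (X * Y - Y * X) * (Y * X - X * Y) =
      (X * Y) * (Y * X) - (X * Y) * (X * Y) - (Y * X) * (Y * X) + (Y * X) * (X * Y) := by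
    noncomm_ring
  rw [expand, T1, T2, T3, T4]
  have hsum : (2 * γ) • (X * Y) + (2 * γ) • (Y * X) =
      (2 * γ * (2 * γ)) • (1 : Matrix (Fin n) (Fin n) ℝ) := by
    rw [← smul_add, hXY, smul_smul]
  have h2 : (2 * γ) • (X * Y) =
      ((2 * γ) * (2 * γ)) • (1 : Matrix (Fin n) (Fin n) ℝ) - (2 * γ) • (Y * X) := by
    rw [eq_sub_iff_add_eq]; exact hsum
  rw [h2]
  module

private lemma ddvv_key {n m : ℕ} (P : Fin (m+1) → Matrix (Fin n) (Fin n) ℝ)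
    (hcliff : ∀ i j, P i * P j + P j * P i =
      ((if i = j then 2 else 0 : ℝ)) • (1 : Matrix (Fin n) (Fin n) ℝ))
    (c d : Fin (m+1) → ℝ) :
    (∑ i, c i • P i) * (∑ j, d j • P j) + (∑ j, d j • P j) * (∑ i, c i • P i)
      = (2 * ∑ i, c i * d i) • (1 : Matrix (Fin n) (Fin n) ℝ) := by
  have h1 : (∑ i, c i • P i) * (∑ j, d j • P j) = ∑ i, ∑ j, (c i * d j) • (P i * P j) := by
    rw [Finset.sum_mul_sum]
    exact Finset.sum_congr rfl fun i _ => Finset.sum_congr rfl fun j _ => by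
      rw [smul_mul_assoc, mul_smul_comm, smul_smul]
  have h2 : (∑ j, d j • P j) * (∑ i, c i • P i) = ∑ i, ∑ j, (c i * d j) • (P j * P i) := by
    rw [Finset.sum_mul_sum, Finset.sum_comm]
    exact Finset.sum_congr rfl fun i _ => Finset.sum_congr rfl fun j _ => by
      rw [smul_mul_assoc, mul_smul_comm, smul_smul, mul_comm (d j) (c i)]
  calc (∑ i, c i • P i) * (∑ j, d j • P j) + (∑ j, d j • P j) * (∑ i, c i • P i)
      = ∑ i, ∑ j, (c i * d j) • ((if i = j then (2:ℝ) else 0) • (1 : Matrix (Fin n) (Fin n) ℝ)) := by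
        rw [h1, h2, ← Finset.sum_add_distrib]
        refine Finset.sum_congr rfl fun i _ => ?_
        rw [← Finset.sum_add_distrib]
        exact Finset.sum_congr rfl fun j _ => by rw [← smul_add, hcliff]
    _ = ∑ i, (c i * d i * 2) • (1 : Matrix (Fin n) (Fin n) ℝ) := by
        refine Finset.sum_congr rfl fun i _ => ?_
        simp [smul_smul, mul_ite, ite_smul, Finset.sum_ite_eq]
    _ = (2 * ∑ i, c i * d i) • (1 : Matrix (Fin n) (Fin n) ℝ) := by
        rw [← Finset.sum_smul, Finset.mul_sum]
        congr 1
        exact Finset.sum_congr rfl fun i _ => by ring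

private lemma ddvv_swap4 {M K : ℕ} (A : Fin M → Fin M → Fin K → Fin K → ℝ) :
    ∑ r, ∑ s, ∑ i, ∑ j, A r s i j = ∑ i, ∑ j, ∑ r, ∑ s, A r s i j := by
  calc ∑ r, ∑ s, ∑ i, ∑ j, A r s i j
      = ∑ r, ∑ i, ∑ s, ∑ j, A r s i j :=
        Finset.sum_congr rfl fun r _ => by rw [Finset.sum_comm]
    _ = ∑ i, ∑ r, ∑ s, ∑ j, A r s i j := by rw [Finset.sum_comm]
    _ = ∑ i, ∑ r, ∑ j, ∑ s, A r s i j :=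
        Finset.sum_congr rfl fun i _ => Finset.sum_congr rfl fun r _ => by rw [Finset.sum_comm]
    _ = ∑ i, ∑ j, ∑ r, ∑ s, A r s i j :=
        Finset.sum_congr rfl fun i _ => by rw [Finset.sum_comm]

private lemma ddvv_gram_ineq (m M : ℕ) (c : Fin M → Fin (m+1) → ℝ) :
    (∑ r, ∑ i, c r i * c r i) ^ 2 ≤
      ((min (m + 1) M : ℕ) : ℝ) * ∑ r, ∑ s, (∑ i, c r i * c s i) ^ 2 := by
  set S : ℝ := ∑ r, ∑ i, c r i * c r i with hS
  set Q : ℝ := ∑ r, ∑ s, (∑ i, c r i * c s i) ^ 2 with hQdef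
  have hM : S ^ 2 ≤ (M : ℝ) * Q := by
    have h1 : S ^ 2 ≤ (M : ℝ) * ∑ r, (∑ i, c r i * c r i) ^ 2 := by
      have := sq_sum_le_card_mul_sum_sq (s := (Finset.univ : Finset (Fin M)))
        (f := fun r => ∑ i, c r i * c r i)
      simpa using this
    have h2 : ∑ r, (∑ i, c r i * c r i) ^ 2 ≤ Q := by
      refine Finset.sum_le_sum fun r _ => ?_
      exact Finset.single_le_sum (f := fun s => (∑ i, c r i * c s i) ^ 2)
        (fun s _ => sq_nonneg _) (Finset.mem_univ r)
    calc S ^ 2 ≤ (M : ℝ) * ∑ r, (∑ i, c r i * c r i) ^ 2 := h1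
      _ ≤ (M : ℝ) * Q := mul_le_mul_of_nonneg_left h2 (by positivity)
  have hS' : S = ∑ i, ∑ r, c r i * c r i := by rw [Finset.sum_comm]
  have hQ' : Q = ∑ i, ∑ j, (∑ r, c r i * c r j) ^ 2 := by
    calc Q = ∑ r, ∑ s, ∑ i, ∑ j, (c r i * c s i) * (c r j * c s j) := by
          refine Finset.sum_congr rfl fun r _ => Finset.sum_congr rfl fun s _ => ?_
          rw [sq, Finset.sum_mul_sum]
      _ = ∑ i, ∑ j, ∑ r, ∑ s, (c r i * c s i) * (c r j * c s j) := ddvv_swap4 _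
      _ = ∑ i, ∑ j, (∑ r, c r i * c r j) ^ 2 := by
          refine Finset.sum_congr rfl fun i _ => Finset.sum_congr rfl fun j _ => ?_
          rw [sq, Finset.sum_mul_sum]
          refine Finset.sum_congr rfl fun r _ => Finset.sum_congr rfl fun s _ => by ring
  have hm : S ^ 2 ≤ ((m + 1 : ℕ) : ℝ) * Q := by
    have h1 : S ^ 2 ≤ ((m + 1 : ℕ) : ℝ) * ∑ i, (∑ r, c r i * c r i) ^ 2 := by
      rw [hS']
      have := sq_sum_le_card_mul_sum_sq (s := (Finset.univ : Finset (Fin (m+1))))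
        (f := fun i => ∑ r, c r i * c r i)
      simpa using this
    have h2 : ∑ i, (∑ r, c r i * c r i) ^ 2 ≤ Q := by
      rw [hQ']
      refine Finset.sum_le_sum fun i _ => ?_
      exact Finset.single_le_sum (f := fun j => (∑ r, c r i * c r j) ^ 2)
        (fun j _ => sq_nonneg _) (Finset.mem_univ i)
    calc S ^ 2 ≤ ((m + 1 : ℕ) : ℝ) * ∑ i, (∑ r, c r i * c r i) ^ 2 := h1
      _ ≤ _ := mul_le_mul_of_nonneg_left h2 (by positivity)
  rcases min_cases (m + 1) M with ⟨h, _⟩ | ⟨h, _⟩ <;> rw [h]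
  · exact hm
  · exact hM

/-- DDVV-type inequality for matrices in the span of a Clifford system. -/
theorem ddvv_clifford_system (l m M : ℕ) (hl : 0 < l)
    (P : Fin (m + 1) → Matrix (Fin (2 * l)) (Fin (2 * l)) ℝ)
    (hsym : ∀ i, (P i)ᵀ = P i)
    (horth : ∀ i, P i * (P i)ᵀ = 1)
    (hcliff : ∀ i j, P i * P j + P j * P i =
      ((if i = j then 2 else 0 : ℝ)) • (1 : Matrix (Fin (2 * l)) (Fin (2 * l)) ℝ))
    (B : Fin M → Matrix (Fin (2 * l)) (Fin (2 * l)) ℝ)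
    (hB : ∀ r, B r ∈ Submodule.span ℝ (Set.range P)) :
    ∑ r, ∑ s, trace ((B r * B s - B s * B r) * (B r * B s - B s * B r)ᵀ) ≤
      (2 / (l : ℝ)) * (1 - 1 / ((min (m + 1) M : ℕ) : ℝ)) *
        (∑ r, trace (B r * (B r)ᵀ)) ^ 2 := by
  classical
  have hex : ∀ r, ∃ c : Fin (m+1) → ℝ, ∑ i, c i • P i = B r := fun r =>
    (Submodule.mem_span_range_iff_exists_fun ℝ).mp (hB r)
  choose c hc using hex
  set g : Fin M → Fin M → ℝ := fun r s => ∑ i, c r i * c s i with hg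
  have hkey : ∀ r s, B r * B s + B s * B r =
      (2 * g r s) • (1 : Matrix (Fin (2 * l)) (Fin (2 * l)) ℝ) := by
    intro r s
    rw [← hc r, ← hc s]
    exact ddvv_key P hcliff (c r) (c s)
  have hBsym : ∀ r, (B r)ᵀ = B r := by
    intro r
    rw [← hc r, transpose_sum]
    exact Finset.sum_congr rfl fun i _ => by rw [transpose_smul, hsym]
  have hsq : ∀ r, B r * B r = (g r r) • (1 : Matrix (Fin (2 * l)) (Fin (2 * l)) ℝ) := by
    intro r
    have h2 : (2:ℝ) • (B r * B r) = (2:ℝ) • ((g r r) • (1 : Matrix (Fin (2 * l)) (Fin (2 * l)) ℝ)) := by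
      rw [two_smul, smul_smul]
      exact hkey r r
    exact smul_right_injective _ two_ne_zero h2
  have htr1 : trace (1 : Matrix (Fin (2 * l)) (Fin (2 * l)) ℝ) = (2 * l : ℝ) := by
    rw [trace_one]
    simp
  have hcomm : ∀ r s, trace ((B r * B s - B s * B r) * (B r * B s - B s * B r)ᵀ)
      = 8 * (l : ℝ) * (g r r * g s s - g r s ^ 2) := by
    intro r s
    rw [ddvv_comm_sq (B r) (B s) (g r r) (g s s) (g r s) (hBsym r) (hBsym s)
      (hsq r) (hsq s) (hkey r s), trace_smul, htr1, smul_eq_mul]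
    ring
  have htr : ∀ r, trace (B r * (B r)ᵀ) = g r r * (2 * (l : ℝ)) := by
    intro r
    rw [hBsym r, hsq r, trace_smul, htr1, smul_eq_mul]
  set S : ℝ := ∑ r, g r r with hSdef
  set Q : ℝ := ∑ r, ∑ s, g r s ^ 2 with hQdef
  have hL : ∑ r, ∑ s, trace ((B r * B s - B s * B r) * (B r * B s - B s * B r)ᵀ)
      = 8 * (l : ℝ) * (S * S - Q) := by
    calc ∑ r, ∑ s, trace ((B r * B s - B s * B r) * (B r * B s - B s * B r)ᵀ)
        = ∑ r, ∑ s, 8 * (l : ℝ) * (g r r * g s s - g r s ^ 2) :=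
          Finset.sum_congr rfl fun r _ => Finset.sum_congr rfl fun s _ => hcomm r s
      _ = 8 * (l : ℝ) * ∑ r, ∑ s, (g r r * g s s - g r s ^ 2) := by
          rw [Finset.mul_sum]
          exact Finset.sum_congr rfl fun r _ => (Finset.mul_sum _ _ _).symm
      _ = 8 * (l : ℝ) * (S * S - Q) := by
          congr 1
          simp only [Finset.sum_sub_distrib]
          congr 1
          · rw [hSdef, Finset.sum_mul_sum]
  have hR : ∑ r, trace (B r * (B r)ᵀ) = S * (2 * (l : ℝ)) := by
    rw [hSdef, Finset.sum_mul]
    exact Finset.sum_congr rfl fun r _ => htr r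
  rw [hL, hR]
  set Nr : ℝ := ((min (m + 1) M : ℕ) : ℝ) with hNr
  have hgram : S ^ 2 ≤ Nr * Q := ddvv_gram_ineq m M c
  have hQnonneg : (0:ℝ) ≤ Q := by positivity
  have hdiv : (1 / Nr) * S ^ 2 ≤ Q := by
    rcases eq_or_lt_of_le (by positivity : (0:ℝ) ≤ Nr) with h0 | h0
    · rw [← h0]
      simpa using hQnonneg
    · rw [one_div, inv_mul_le_iff₀ h0]
      exact hgram
  have hlpos : (0:ℝ) < (l : ℝ) := by exact_mod_cast hl
  have hRform : (2 / (l : ℝ)) * (1 - 1 / Nr) * (S * (2 * (l : ℝ))) ^ 2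
      = 8 * (l : ℝ) * ((1 - 1 / Nr) * S ^ 2) := by
    field_simp
    ring
  rw [hRform]
  have h8 : 8 * (l : ℝ) * ((1 / Nr) * S ^ 2) ≤ 8 * (l : ℝ) * Q :=
    mul_le_mul_of_nonneg_left hdiv (by positivity)
  nlinarith [h8, sq_nonneg S]
end

section
/- Let E₁,…,E_{m-1} be real skew-symmetric orthogonal l×l matrices satisfying E_iE_j + E_jE_i = -2δ_{ij}I_l. If B₁,…,B_M are real linear combinations of E₁,…,E_{m-1}, then ∑_{r,s=1}^M ‖[B_r,B_s]‖² ≤ (4/l)(1 - 1/N)(∑_{r=1}^M ‖B_r‖²)², where N = min(m-1, M). -/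
open Matrix

private lemma trace_sq_le_card (n : ℕ) (A : Matrix (Fin n) (Fin n) ℝ) :
    (trace A)^2 ≤ (n : ℝ) * trace (A * Aᵀ) := by
  have h2 : trace (A * Aᵀ) = ∑ i, ∑ j, (A i j)^2 := by
    simp [Matrix.trace, Matrix.mul_apply, Matrix.diag, sq]
  have h1 : trace A = ∑ i, A i i := rfl
  rw [h1, h2]
  calc (∑ i, A i i)^2 ≤ ((Finset.univ : Finset (Fin n)).card : ℝ) * ∑ i, (A i i)^2 :=
        sq_sum_le_card_mul_sum_sq
    _ ≤ (n:ℝ) * ∑ i, ∑ j, (A i j)^2 := by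
        rw [Finset.card_univ, Fintype.card_fin]
        refine mul_le_mul_of_nonneg_left (Finset.sum_le_sum fun i _ => ?_) (by positivity)
        exact Finset.single_le_sum (f := fun j => (A i j)^2) (fun j _ => sq_nonneg _)
          (Finset.mem_univ i)

private lemma tr_mul_transpose {p q : Type*} [Fintype p] [Fintype q]
    (A : Matrix p q ℝ) : trace (A * Aᵀ) = ∑ i, ∑ j, (A i j)^2 := by
  simp [Matrix.trace, Matrix.mul_apply, Matrix.diag, sq]

private lemma anti_aux (l n : ℕ)
    (E : Fin n → Matrix (Fin l) (Fin l) ℝ)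
    (hcliff : ∀ i j, E i * E j + E j * E i =
      ((if i = j then -2 else 0 : ℝ)) • (1 : Matrix (Fin l) (Fin l) ℝ))
    (a b : Fin n → ℝ) :
    (∑ i, a i • E i) * (∑ j, b j • E j) + (∑ i, b i • E i) * (∑ j, a j • E j)
      = (-2 * ∑ i, a i * b i) • (1 : Matrix (Fin l) (Fin l) ℝ) := by
  rw [Finset.sum_mul_sum, Finset.sum_mul_sum]
  rw [Finset.sum_comm (f := fun i j => (b i • E i) * (a j • E j))]
  rw [← Finset.sum_add_distrib]
  simp_rw [← Finset.sum_add_distrib, smul_mul_smul_comm]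
  have : ∀ i j : Fin n, (a i * b j) • (E i * E j) + (b j * a i) • (E j * E i)
      = (a i * b j * (if i = j then (-2:ℝ) else 0)) • (1 : Matrix (Fin l) (Fin l) ℝ) := by
    intro i j
    rw [mul_comm (b j) (a i), ← smul_add, hcliff i j, smul_smul]
  simp_rw [this]
  simp only [mul_ite, mul_zero, ite_smul, zero_smul, Finset.sum_ite_eq, Finset.mem_univ,
    if_true]
  rw [← Finset.sum_smul, mul_comm, ← Finset.sum_mul]

set_option maxHeartbeats 1000000 in
/-- DDVV-type inequality for matrices in the span of a Clifford algebra representation. -/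
theorem ddvv_clifford_algebra (l m M : ℕ) (hl : 0 < l)
    (E : Fin (m - 1) → Matrix (Fin l) (Fin l) ℝ)
    (hskew : ∀ i, (E i)ᵀ = -(E i))
    (horth : ∀ i, E i * (E i)ᵀ = 1)
    (hcliff : ∀ i j, E i * E j + E j * E i =
      ((if i = j then -2 else 0 : ℝ)) • (1 : Matrix (Fin l) (Fin l) ℝ))
    (B : Fin M → Matrix (Fin l) (Fin l) ℝ)
    (hB : ∀ r, B r ∈ Submodule.span ℝ (Set.range E)) :
    ∑ r, ∑ s, trace ((B r * B s - B s * B r) * (B r * B s - B s * B r)ᵀ) ≤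
      (4 / (l : ℝ)) * (1 - 1 / ((min (m - 1) M : ℕ) : ℝ)) *
        (∑ r, trace (B r * (B r)ᵀ)) ^ 2 := by
  -- extract coefficients
  have hx' : ∀ r, ∃ c : Fin (m-1) → ℝ, ∑ i, c i • E i = B r := by
    intro r
    exact (Submodule.mem_span_range_iff_exists_fun ℝ).mp (hB r)
  choose x hx using hx'
  set d : Fin M → Fin M → ℝ := fun r s => ∑ i, x r i * x s i with hd
  have hdsymm : ∀ r s, d r s = d s r := by
    intro r s; simp only [hd]; exact Finset.sum_congr rfl fun i _ => mul_comm _ _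
  -- anticommutation
  have hanti : ∀ r s, B r * B s + B s * B r
      = (-2 * d r s) • (1 : Matrix (Fin l) (Fin l) ℝ) := by
    intro r s
    rw [← hx r, ← hx s]
    exact anti_aux l (m-1) E hcliff (x r) (x s)
  -- squares
  have hsq : ∀ r, B r * B r = (-(d r r)) • (1 : Matrix (Fin l) (Fin l) ℝ) := by
    intro r
    have h := hanti r r
    have h2 : (2:ℝ) • (B r * B r) = (-2 * d r r) • (1 : Matrix (Fin l) (Fin l) ℝ) := by
      rw [two_smul]; exact h
    have := congrArg (fun A => ((2:ℝ)⁻¹) • A) h2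
    simpa [smul_smul] using this
  -- transpose
  have hBT : ∀ r, (B r)ᵀ = -(B r) := by
    intro r
    rw [← hx r, transpose_sum]
    simp [transpose_smul, hskew, smul_neg]
  -- trace of product
  have htr : ∀ r s, trace (B r * B s) = -(d r s) * l := by
    intro r s
    have h := congrArg trace (hanti r s)
    rw [trace_add, trace_smul, trace_one, trace_mul_comm (B s) (B r)] at h
    simp only [Fintype.card_fin, smul_eq_mul] at h
    linarith [h]
  -- trace of fourth power
  have htr4 : ∀ r s, trace (B r * B s * (B r * B s))
      = (2 * d r s ^ 2 - d r r * d s s) * l := by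
    intro r s
    have key : B r * B s * (B r * B s)
        = (-2 * d r s) • (B r * B s) - (d r r * d s s) • (1 : Matrix (Fin l) (Fin l) ℝ) := by
      have h1 : B s * B r = (-2 * d r s) • (1 : Matrix (Fin l) (Fin l) ℝ) - B r * B s := by
        rw [← hanti r s]; noncomm_ring
      calc B r * B s * (B r * B s) = B r * (B s * B r) * B s := by noncomm_ring
        _ = B r * ((-2 * d r s) • (1 : Matrix (Fin l) (Fin l) ℝ) - B r * B s) * B s := by
            rw [h1]
        _ = (-2 * d r s) • (B r * B s) - (B r * B r) * (B s * B s) := by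
            rw [mul_sub, sub_mul]
            congr 1
            · rw [mul_smul_comm, mul_one, smul_mul_assoc]
            · noncomm_ring
        _ = (-2 * d r s) • (B r * B s) - (d r r * d s s) • (1 : Matrix (Fin l) (Fin l) ℝ) := by
            rw [hsq r, hsq s, smul_mul_smul_comm, one_mul]
            congr 2
            ring
    rw [key, trace_sub, trace_smul, trace_smul, trace_one, htr r s]
    simp only [Fintype.card_fin, smul_eq_mul]
    ring
  -- trace of middle products
  have htrm : ∀ r s, trace (B r * B s * (B s * B r)) = (d r r * d s s) * l := by
    intro r s
    have key : B r * B s * (B s * B r) = (d r r * d s s) • (1 : Matrix (Fin l) (Fin l) ℝ) := by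
      calc B r * B s * (B s * B r) = B r * (B s * B s) * B r := by noncomm_ring
        _ = B r * ((-(d s s)) • (1 : Matrix (Fin l) (Fin l) ℝ)) * B r := by rw [hsq s]
        _ = (-(d s s)) • (B r * B r) := by
            rw [mul_smul_comm, mul_one, smul_mul_assoc]
        _ = (d r r * d s s) • (1 : Matrix (Fin l) (Fin l) ℝ) := by
            rw [hsq r, smul_smul]; congr 1; ring
    rw [key, trace_smul, trace_one]
    simp [Fintype.card_fin]
  -- main term
  have hterm : ∀ r s, trace ((B r * B s - B s * B r) * (B r * B s - B s * B r)ᵀ)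
      = 4 * (d r r * d s s - d r s ^ 2) * l := by
    intro r s
    have hT : (B r * B s - B s * B r)ᵀ = -(B r * B s - B s * B r) := by
      rw [transpose_sub, transpose_mul, transpose_mul, hBT r, hBT s]
      noncomm_ring
    rw [hT, mul_neg, trace_neg]
    have expand : (B r * B s - B s * B r) * (B r * B s - B s * B r)
        = B r * B s * (B r * B s) - B r * B s * (B s * B r)
          - B s * B r * (B r * B s) + B s * B r * (B s * B r) := by
      noncomm_ring
    have h3 : trace (B s * B r * (B r * B s)) = (d r r * d s s) * l := by
      rw [htrm s r]; ring
    rw [expand, trace_add, trace_sub, trace_sub, htr4 r s, htrm r s, h3, htr4 s r,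
      hdsymm s r]
    ring
  have htrB : ∀ r, trace (B r * (B r)ᵀ) = d r r * l := by
    intro r
    rw [hBT r, mul_neg, trace_neg, htr r r]; ring
  set P : ℝ := ∑ r, d r r with hP
  set D : ℝ := ∑ r, ∑ s, (d r s)^2 with hDdef
  have hD0 : 0 ≤ D := by
    rw [hDdef]
    positivity
  have hLHS : ∑ r, ∑ s, trace ((B r * B s - B s * B r) * (B r * B s - B s * B r)ᵀ)
      = 4 * (P^2 - D) * l := by
    have hP2 : P^2 = ∑ r, ∑ s, d r r * d s s := by
      rw [sq, hP, Finset.sum_mul_sum]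
    calc ∑ r, ∑ s, trace ((B r * B s - B s * B r) * (B r * B s - B s * B r)ᵀ)
        = ∑ r, ∑ s, (4 * (d r r * d s s - d r s^2) * (l:ℝ)) :=
          Finset.sum_congr rfl fun r _ => Finset.sum_congr rfl fun s _ => hterm r s
      _ = 4 * ((∑ r, ∑ s, d r r * d s s) - D) * l := by
          rw [hDdef, ← Finset.sum_sub_distrib]
          simp_rw [← Finset.sum_sub_distrib]
          rw [Finset.mul_sum, Finset.sum_mul]
          refine Finset.sum_congr rfl fun r _ => ?_
          rw [Finset.mul_sum, Finset.sum_mul]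
      _ = 4 * (P^2 - D) * l := by rw [hP2]
  have hRHS : ∑ r, trace (B r * (B r)ᵀ) = P * l := by
    rw [hP, Finset.sum_mul]
    exact Finset.sum_congr rfl fun r _ => htrB r
  -- Gram matrix bounds
  set X : Matrix (Fin (m-1)) (Fin M) ℝ := Matrix.of fun i r => x r i with hXdef
  have hG : ∀ r s, (Xᵀ * X) r s = d r s := by
    intro r s
    simp [Matrix.mul_apply, Matrix.transpose_apply, hXdef, hd]
  have htrG : trace (Xᵀ * X) = P := by
    rw [hP, Matrix.trace]
    exact Finset.sum_congr rfl fun r _ => hG r r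
  have htrGG : trace ((Xᵀ * X) * (Xᵀ * X)ᵀ) = D := by
    rw [tr_mul_transpose, hDdef]
    exact Finset.sum_congr rfl fun r _ => Finset.sum_congr rfl fun s _ => by rw [hG r s]
  have bound1 : P^2 ≤ (M:ℝ) * D := by
    have := trace_sq_le_card M (Xᵀ * X)
    rwa [htrG, htrGG] at this
  have bound2 : P^2 ≤ ((m-1 : ℕ):ℝ) * D := by
    have h := trace_sq_le_card (m-1) (X * Xᵀ)
    have e1 : trace (X * Xᵀ) = P := by rw [trace_mul_comm, htrG]
    have e2 : trace ((X * Xᵀ) * (X * Xᵀ)ᵀ) = D := by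
      rw [← htrGG]
      have hGsymm : (Xᵀ * X)ᵀ = Xᵀ * X := by
        rw [transpose_mul, transpose_transpose]
      have hHsymm : (X * Xᵀ)ᵀ = X * Xᵀ := by
        rw [transpose_mul, transpose_transpose]
      rw [hGsymm, hHsymm, Matrix.mul_assoc X Xᵀ (X * Xᵀ),
        Matrix.trace_mul_comm X (Xᵀ * (X * Xᵀ)), ← Matrix.mul_assoc, ← Matrix.mul_assoc,
        Matrix.mul_assoc (Xᵀ * X)]
    rwa [e1, e2] at h
  set N : ℝ := ((min (m - 1) M : ℕ) : ℝ) with hN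
  have hND : P^2 ≤ N * D := by
    rcases le_total (m-1) M with h | h
    · rw [hN, min_eq_left h]; exact bound2
    · rw [hN, min_eq_right h]; exact bound1
  have hkey : P^2 * (1/N) ≤ D := by
    by_cases hN0 : N = 0
    · simp [hN0, hD0]
    · have hNpos : 0 < N := by
        rw [hN]
        exact_mod_cast Nat.pos_of_ne_zero (by exact_mod_cast fun h => hN0 (by rw [hN, h]; simp))
      rw [mul_one_div, div_le_iff₀ hNpos]
      linarith [hND]
  rw [hLHS, hRHS]
  have hlpos : (0:ℝ) < l := by exact_mod_cast hl
  have hr : (4/(l:ℝ))*(1-1/N)*(P*l)^2 = 4*((1-1/N)*P^2)*l := by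
    field_simp
  rw [hr]
  nlinarith [hkey, hlpos, mul_le_mul_of_nonneg_right hkey (le_of_lt hlpos)]
end

section
/- Let A be an n×n real diagonal matrix with Frobenius norm 1, and let A₂,…,A_m be real symmetric n×n matrices with tr(A_α A_β) = 0 for α ≠ β and ‖A₂‖ ≥ ‖A₃‖ ≥ … ≥ ‖A_m‖. Then ∑_{α=2}^m ‖[A,A_α]‖² ≤ ∑_{α=2}^m ‖A_α‖² + ‖A₂‖². -/
open Matrix

lemma foursum {n : ℕ} (a : Fin n → ℝ) {i j k l : Fin n}
    (hij : i ≠ j) (hik : i ≠ k) (hil : i ≠ l) (hjk : j ≠ k) (hjl : j ≠ l) (hkl : k ≠ l) :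
    a i ^ 2 + a j ^ 2 + a k ^ 2 + a l ^ 2 ≤ ∑ t, a t ^ 2 := by
  have h := Finset.sum_le_sum_of_subset_of_nonneg
    (Finset.subset_univ ({i, j, k, l} : Finset (Fin n)))
    (fun t _ _ => sq_nonneg (a t))
  rw [Finset.sum_insert (by simp [hij, hik, hil]), Finset.sum_insert (by simp [hjk, hjl]),
      Finset.sum_insert (by simp [hkl]), Finset.sum_singleton] at h
  linarith

lemma threesum {n : ℕ} (a : Fin n → ℝ) {i j k : Fin n}
    (hij : i ≠ j) (hik : i ≠ k) (hjk : j ≠ k) :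
    a i ^ 2 + a j ^ 2 + a k ^ 2 ≤ ∑ t, a t ^ 2 := by
  have h := Finset.sum_le_sum_of_subset_of_nonneg
    (Finset.subset_univ ({i, j, k} : Finset (Fin n)))
    (fun t _ _ => sq_nonneg (a t))
  rw [Finset.sum_insert (by simp [hij, hik]), Finset.sum_insert (by simp [hjk]),
      Finset.sum_singleton] at h
  linarith

lemma heavy_ne {n : ℕ} {a : Fin n → ℝ} {i j : Fin n} (h : 1 < (a i - a j)^2) : i ≠ j := by
  rintro rfl; simp at h; linarith

lemma heavy_symm {n : ℕ} {a : Fin n → ℝ} {i j : Fin n} (h : 1 < (a i - a j)^2) :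
    1 < (a j - a i)^2 := by
  have : (a j - a i)^2 = (a i - a j)^2 := by ring
  linarith

lemma inter {n : ℕ} (a : Fin n → ℝ) (ha : ∑ t, a t ^ 2 ≤ 1) {i j k l : Fin n}
    (hij : 1 < (a i - a j)^2) (hkl : 1 < (a k - a l)^2) :
    i = k ∨ i = l ∨ j = k ∨ j = l := by
  by_contra hc
  push_neg at hc
  obtain ⟨h1, h2, h3, h4⟩ := hc
  have h5 := foursum a (heavy_ne hij) h1 h2 h3 h4 (heavy_ne hkl)
  nlinarith [sq_nonneg (a i + a j), sq_nonneg (a k + a l)]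

lemma notriangle {n : ℕ} (a : Fin n → ℝ) (ha : ∑ t, a t ^ 2 ≤ 1) {i j k : Fin n}
    (hij : 1 < (a i - a j)^2) (hjk : 1 < (a j - a k)^2) (hik : 1 < (a i - a k)^2) :
    False := by
  have h5 := threesum a (heavy_ne hij) (heavy_ne hik) (heavy_ne hjk)
  nlinarith [sq_nonneg (a i + a j + a k)]
lemma star {n : ℕ} (a : Fin n → ℝ) (ha : ∑ t, a t ^ 2 ≤ 1)
    (hex : ∃ i j, 1 < (a i - a j)^2) :
    ∃ i₀, ∀ i j, 1 < (a i - a j)^2 → i = i₀ ∨ j = i₀ := by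
  obtain ⟨p, q, hpq⟩ := hex
  by_cases hp : ∀ i j, 1 < (a i - a j)^2 → i = p ∨ j = p
  · exact ⟨p, hp⟩
  push_neg at hp
  obtain ⟨i, j, hij, hip, hjp⟩ := hp
  -- q ∈ {i, j}
  have hq : 1 < (a q - a i)^2 ∨ 1 < (a q - a j)^2 := by
    rcases inter a ha hpq hij with h | h | h | h
    · exact absurd h.symm hip
    · exact absurd h.symm hjp
    · subst h; exact Or.inr hij  -- q = i : heavy q j
    · subst h; exact Or.inl (heavy_symm hij)  -- q = j : heavy i q → heavy q i
  obtain ⟨r, hqr, hrp⟩ : ∃ r, 1 < (a q - a r)^2 ∧ r ≠ p := by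
    rcases hq with h | h
    · exact ⟨i, h, hip⟩
    · exact ⟨j, h, hjp⟩
  refine ⟨q, fun k l hkl => ?_⟩
  by_contra hc
  push_neg at hc
  obtain ⟨hkq, hlq⟩ := hc
  have h1 : p = k ∨ p = l := by
    rcases inter a ha hpq hkl with h | h | h | h
    · exact Or.inl h
    · exact Or.inr h
    · exact absurd h.symm hkq
    · exact absurd h.symm hlq
  have h2 : r = k ∨ r = l := by
    rcases inter a ha hqr hkl with h | h | h | h
    · exact absurd h.symm hkq
    · exact absurd h.symm hlq
    · exact Or.inl h
    · exact Or.inr h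
  -- heavy p r or heavy r p
  rcases h1 with rfl | rfl <;> rcases h2 with rfl | rfl
  · exact hrp rfl
  · exact notriangle a ha hpq hqr hkl
  · exact notriangle a ha hpq hqr (heavy_symm hkl)
  · exact hrp rfl

lemma sq_sub_le_sq_abs_add (x y : ℝ) : (x - y)^2 ≤ (|x| + |y|)^2 := by
  have h1 : -(x * y) ≤ |x| * |y| := by
    rw [← abs_mul]; exact neg_le_abs _
  nlinarith [sq_abs x, sq_abs y]

lemma starsum {n : ℕ} (a : Fin n → ℝ) (ha : ∑ t, a t ^ 2 ≤ 1) (i₀ : Fin n) :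
    ∑ j, max 0 ((a i₀ - a j)^2 - 1) ≤ 1 := by
  classical
  set x := a i₀ with hx
  set J : Finset (Fin n) := Finset.univ.filter (fun j => j ≠ i₀ ∧ 1 < (|x| + |a j|)^2) with hJ
  have hi₀J : i₀ ∉ J := by simp [hJ]
  have hJx : x^2 + ∑ j ∈ J, a j ^ 2 ≤ 1 := by
    have h := Finset.sum_le_sum_of_subset_of_nonneg
      (Finset.subset_univ (insert i₀ J)) (fun t _ _ => sq_nonneg (a t))
    rw [Finset.sum_insert hi₀J] at h
    linarith
  have hred : ∑ j, max 0 ((a i₀ - a j)^2 - 1) = ∑ j ∈ J, max 0 ((a i₀ - a j)^2 - 1) := by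
    refine (Finset.sum_subset (Finset.subset_univ J) ?_).symm
    intro j _ hjJ
    rcases eq_or_ne j i₀ with rfl | hji
    · simp
    · have hsmall : ¬ (1 < (|x| + |a j|)^2) := by
        by_contra hcc
        exact hjJ (Finset.mem_filter.mpr ⟨Finset.mem_univ j, hji, hcc⟩)
      push_neg at hsmall
      have habs := sq_sub_le_sq_abs_add x (a j)
      have : (a i₀ - a j)^2 - 1 ≤ 0 := by rw [← hx]; linarith
      exact max_eq_left this
  rw [hred]
  have hterm : ∑ j ∈ J, max 0 ((a i₀ - a j)^2 - 1) ≤ ∑ j ∈ J, ((|x| + |a j|)^2 - 1) := by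
    refine Finset.sum_le_sum (fun j hj => ?_)
    have hjJ : 1 < (|x| + |a j|)^2 := (Finset.mem_filter.mp hj).2.2
    have habs := sq_sub_le_sq_abs_add x (a j)
    exact max_le (by linarith) (by rw [← hx]; linarith)
  refine le_trans hterm ?_
  set k : ℝ := (J.card : ℝ) with hk
  set S : ℝ := ∑ j ∈ J, |a j| with hS
  set V2 : ℝ := ∑ j ∈ J, a j ^ 2 with hV2
  have hexp : ∑ j ∈ J, ((|x| + |a j|)^2 - 1) = k * (|x|^2 - 1) + 2 * |x| * S + V2 := by
    have h1 : ∀ j ∈ J, (|x| + |a j|)^2 - 1 = (|x|^2 - 1) + 2 * |x| * |a j| + a j ^2 := by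
      intro j _
      rw [← sq_abs (a j)]; ring
    rw [Finset.sum_congr rfl h1, Finset.sum_add_distrib, Finset.sum_add_distrib,
        Finset.sum_const, ← Finset.mul_sum, ← hS, ← hV2]
    simp [hk, mul_comm]
  rw [hexp]
  have hcs : S^2 ≤ k * V2 := by
    have h := Finset.sum_mul_sq_le_sq_mul_sq J (fun _ => 1) (fun j => |a j|)
    simp only [one_pow, one_mul, Finset.sum_const, nsmul_eq_mul, mul_one, sq_abs] at h
    calc S^2 = (∑ j ∈ J, |a j|)^2 := by rw [hS]
    _ ≤ (J.card : ℝ) * ∑ j ∈ J, a j^2 := by simpa [sq_abs] using h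
    _ = k * V2 := by rw [hk, hV2]
  have hX2 : |x|^2 = x^2 := sq_abs x
  have hk0 : (0:ℝ) ≤ k := by rw [hk]; positivity
  have hS0 : (0:ℝ) ≤ S := Finset.sum_nonneg (fun j _ => abs_nonneg _)
  have hV20 : (0:ℝ) ≤ V2 := Finset.sum_nonneg (fun j _ => sq_nonneg _)
  have hX0 : (0:ℝ) ≤ |x| := abs_nonneg x
  nlinarith [sq_nonneg (|x| - S), mul_le_mul_of_nonneg_left (show x^2 + V2 ≤ 1 by linarith) hk0]
lemma scalar {n : ℕ} (a : Fin n → ℝ) (ha : ∑ t, a t ^ 2 ≤ 1) :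
    ∑ i, ∑ j, max 0 ((a i - a j)^2 - 1) ≤ 2 := by
  classical
  by_cases hex : ∃ i j, 1 < (a i - a j)^2
  · obtain ⟨i₀, hstar⟩ := star a ha hex
    have hzero : ∀ i, i ≠ i₀ → ∀ j, j ≠ i₀ → max 0 ((a i - a j)^2 - 1) = 0 := by
      intro i hi j hj
      have : ¬ (1 < (a i - a j)^2) := by
        intro h; rcases hstar i j h with h' | h' <;> [exact hi h'; exact hj h']
      push_neg at this
      exact max_eq_left (by linarith)
    have hsplit : ∑ i, ∑ j, max 0 ((a i - a j)^2 - 1)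
        = (∑ j, max 0 ((a i₀ - a j)^2 - 1)) + ∑ i ∈ Finset.univ.erase i₀, max 0 ((a i - a i₀)^2 - 1) := by
      rw [← Finset.add_sum_erase _ _ (Finset.mem_univ i₀)]
      congr 1
      refine Finset.sum_congr rfl (fun i hi => ?_)
      have hii : i ≠ i₀ := (Finset.mem_erase.mp hi).1
      rw [Finset.sum_eq_single i₀]
      · intro j _ hj; exact hzero i hii j hj
      · intro h; exact absurd (Finset.mem_univ i₀) h
    rw [hsplit]
    have h2 : ∑ i ∈ Finset.univ.erase i₀, max 0 ((a i - a i₀)^2 - 1)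
        ≤ ∑ i, max 0 ((a i - a i₀)^2 - 1) :=
      Finset.sum_le_sum_of_subset_of_nonneg (Finset.erase_subset _ _)
        (fun i _ _ => le_max_left _ _)
    have h3 : ∑ i, max 0 ((a i - a i₀)^2 - 1) = ∑ i, max 0 ((a i₀ - a i)^2 - 1) := by
      refine Finset.sum_congr rfl (fun i _ => ?_)
      have : (a i - a i₀)^2 = (a i₀ - a i)^2 := by ring
      rw [this]
    have h4 := starsum a ha i₀
    linarith [h4, h2, h3.le, h3.ge]
  · push_neg at hex
    have : ∀ i j : Fin n, max 0 ((a i - a j)^2 - 1) = 0 := fun i j =>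
      max_eq_left (by linarith [hex i j])
    calc ∑ i, ∑ j, max 0 ((a i - a j)^2 - 1) = 0 := by
          refine Finset.sum_eq_zero (fun i _ => Finset.sum_eq_zero (fun j _ => this i j))
      _ ≤ 2 := by norm_num

lemma comm4 {n m : ℕ} (F : Fin m → Fin m → Fin n → Fin n → ℝ) :
    (∑ k, ∑ l, ∑ α, ∑ β, F α β k l) = ∑ α, ∑ β, ∑ k, ∑ l, F α β k l := by
  calc (∑ k, ∑ l, ∑ α, ∑ β, F α β k l)
      = ∑ k, ∑ α, ∑ l, ∑ β, F α β k l :=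
        Finset.sum_congr rfl (fun k _ => Finset.sum_comm)
    _ = ∑ α, ∑ k, ∑ l, ∑ β, F α β k l := Finset.sum_comm
    _ = ∑ α, ∑ k, ∑ β, ∑ l, F α β k l :=
        Finset.sum_congr rfl (fun α _ => Finset.sum_congr rfl (fun k _ => Finset.sum_comm))
    _ = ∑ α, ∑ β, ∑ k, ∑ l, F α β k l :=
        Finset.sum_congr rfl (fun α _ => Finset.sum_comm)
lemma bessel {n m : ℕ} (B : Fin m → Matrix (Fin n) (Fin n) ℝ)
    (hsym : ∀ α k l, B α l k = B α k l)
    (horth : ∀ α β : Fin m, α ≠ β → ∑ k, ∑ l, B α k l * B β k l = 0)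
    (c : ℝ) (hc0 : 0 ≤ c) (hc : ∀ α, ∑ k, ∑ l, (B α k l)^2 ≤ c)
    (i j : Fin n) (hij : i ≠ j) :
    ∑ α, (B α i j)^2 ≤ c / 2 := by
  classical
  set t : Fin m → ℝ := fun α => B α i j with ht
  set S : ℝ := ∑ α, (t α)^2 with hSdef
  set E : Fin n → Fin n → ℝ :=
    fun k l => (if k = i ∧ l = j then 1 else 0) + (if k = j ∧ l = i then 1 else 0) with hE
  set Y : Fin n → Fin n → ℝ := fun k l => ∑ α, 2 * t α * B α k l with hY
  have hS0 : 0 ≤ S := Finset.sum_nonneg (fun α _ => sq_nonneg _)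
  have hE2 : ∑ k, ∑ l, (E k l)^2 = 2 := by
    have hpt : ∀ k l, (E k l)^2
        = (if k = i ∧ l = j then 1 else 0) + (if k = j ∧ l = i then 1 else 0) := by
      intro k l
      by_cases h1 : k = i ∧ l = j
      · have h2 : ¬(k = j ∧ l = i) := fun h => hij (h1.1.symm.trans h.1)
        simp [hE, h1, h2, hij, Ne.symm hij]
      · by_cases h2 : k = j ∧ l = i
        · simp [hE, h1, h2, hij, Ne.symm hij]
        · simp [hE, h1, h2, hij, Ne.symm hij]
    simp_rw [hpt, Finset.sum_add_distrib, ite_and]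
    simp [Finset.sum_ite_eq', hij]
    norm_num
  have hYij : Y i j = 2 * S := by
    show (∑ α, 2 * t α * B α i j) = 2 * S
    rw [hSdef, Finset.mul_sum]
    exact Finset.sum_congr rfl (fun α _ => by simp only [ht]; ring)
  have hYji : Y j i = 2 * S := by
    show (∑ α, 2 * t α * B α j i) = 2 * S
    rw [hSdef, Finset.mul_sum]
    refine Finset.sum_congr rfl (fun α _ => ?_)
    rw [hsym α i j]
    simp only [ht]; ring
  have hEY : ∑ k, ∑ l, E k l * Y k l = 4 * S := by
    have hpt : ∀ k l, E k l * Y k l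
        = (if k = i ∧ l = j then Y i j else 0) + (if k = j ∧ l = i then Y j i else 0) := by
      intro k l
      by_cases h1 : k = i ∧ l = j
      · have h2 : ¬(k = j ∧ l = i) := fun h => hij (h1.1.symm.trans h.1)
        rw [if_pos h1, if_neg h2]
        have hE' : E k l = 1 := by simp [hE, h1, h2, hij, Ne.symm hij]
        rw [hE', h1.1, h1.2]; ring
      · by_cases h2 : k = j ∧ l = i
        · rw [if_neg h1, if_pos h2]
          have hE' : E k l = 1 := by simp [hE, h1, h2, hij, Ne.symm hij]
          rw [hE', h2.1, h2.2]; ring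
        · rw [if_neg h1, if_neg h2]
          have hE' : E k l = 0 := by simp [hE, h1, h2]
          rw [hE']; ring
    simp_rw [hpt, Finset.sum_add_distrib]
    simp [ite_and, Finset.sum_ite_eq']
    rw [hYij, hYji]; ring
  have hY2 : ∑ k, ∑ l, (Y k l)^2 = ∑ α, 4 * (t α)^2 * (∑ k, ∑ l, (B α k l)^2) := by
    have h1 : ∀ k l, (Y k l)^2 = ∑ α, ∑ β, (2 * t α * B α k l) * (2 * t β * B β k l) := by
      intro k l
      rw [sq, hY]
      exact Finset.sum_mul_sum _ _ _ _
    calc ∑ k, ∑ l, (Y k l)^2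
        = ∑ k, ∑ l, ∑ α, ∑ β, (2 * t α * B α k l) * (2 * t β * B β k l) :=
          Finset.sum_congr rfl (fun k _ => Finset.sum_congr rfl (fun l _ => h1 k l))
      _ = ∑ α, ∑ β, ∑ k, ∑ l, (2 * t α * B α k l) * (2 * t β * B β k l) := comm4 _
      _ = ∑ α, ∑ β, (4 * t α * t β) * ∑ k, ∑ l, B α k l * B β k l := by
          refine Finset.sum_congr rfl (fun α _ => Finset.sum_congr rfl (fun β _ => ?_))
          rw [Finset.mul_sum]
          refine Finset.sum_congr rfl (fun k _ => ?_)
          rw [Finset.mul_sum]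
          exact Finset.sum_congr rfl (fun l _ => by ring)
      _ = ∑ α, 4 * (t α)^2 * (∑ k, ∑ l, (B α k l)^2) := by
          refine Finset.sum_congr rfl (fun α _ => ?_)
          rw [Finset.sum_eq_single α]
          · rw [show (4 : ℝ) * t α * t α = 4 * (t α)^2 by ring]
            congr 1
            exact Finset.sum_congr rfl (fun k _ =>
              Finset.sum_congr rfl (fun l _ => (pow_two (B α k l)).symm))
          · intro β _ hβ
            rw [horth α β (Ne.symm hβ), mul_zero]
          · intro h; exact absurd (Finset.mem_univ α) h
  have hpos : 0 ≤ ∑ k, ∑ l, (c * E k l - Y k l)^2 :=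
    Finset.sum_nonneg (fun k _ => Finset.sum_nonneg (fun l _ => sq_nonneg _))
  have hexpand : ∑ k, ∑ l, (c * E k l - Y k l)^2
      = c^2 * (∑ k, ∑ l, (E k l)^2) - 2 * c * (∑ k, ∑ l, E k l * Y k l)
        + ∑ k, ∑ l, (Y k l)^2 := by
    simp_rw [Finset.mul_sum, ← Finset.sum_sub_distrib, ← Finset.sum_add_distrib]
    exact Finset.sum_congr rfl (fun k _ => Finset.sum_congr rfl (fun l _ => by ring))
  have hY2le : ∑ k, ∑ l, (Y k l)^2 ≤ 4 * c * S := by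
    rw [hY2]
    calc ∑ α, 4 * (t α)^2 * (∑ k, ∑ l, (B α k l)^2)
        ≤ ∑ α, 4 * c * (t α)^2 :=
          Finset.sum_le_sum (fun α _ => by nlinarith [hc α, sq_nonneg (t α)])
      _ = 4 * c * S := by rw [hSdef, Finset.mul_sum]
  have hkey : 0 ≤ 2 * c^2 - 4 * c * S := by
    have := hpos
    rw [hexpand, hE2, hEY] at this
    linarith
  rcases hc0.lt_or_eq with hcpos | hczero
  · have : S ≤ c / 2 := by nlinarith
    calc ∑ α, (B α i j)^2 = S := by rw [hSdef]
      _ ≤ c / 2 := this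
  · -- c = 0 : every B α is zero at (i,j)
    have hzero : ∀ α, (B α i j)^2 = 0 := by
      intro α
      have h1 : (B α i j)^2 ≤ ∑ l, (B α i l)^2 :=
        Finset.single_le_sum (f := fun l => (B α i l)^2) (fun l _ => sq_nonneg _)
          (Finset.mem_univ j)
      have h2 : (∑ l, (B α i l)^2) ≤ ∑ k, ∑ l, (B α k l)^2 :=
        Finset.single_le_sum (f := fun k => ∑ l, (B α k l)^2)
          (fun k _ => Finset.sum_nonneg (fun l _ => sq_nonneg _)) (Finset.mem_univ i)
      have h3 := hc α
      nlinarith [sq_nonneg (B α i j)]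
    calc ∑ α, (B α i j)^2 = 0 := Finset.sum_eq_zero (fun α _ => hzero α)
      _ ≤ c / 2 := by rw [← hczero]; norm_num
open Matrix

lemma lu_trace_eq {n : ℕ} (M N : Matrix (Fin n) (Fin n) ℝ) :
    trace (M * Nᵀ) = ∑ k, ∑ l, M k l * N k l := by
  simp [Matrix.trace, Matrix.mul_apply, Matrix.diag]

lemma lu_comm3 {n m : ℕ} (F : Fin m → Fin n → Fin n → ℝ) :
    (∑ α, ∑ i, ∑ j, F α i j) = ∑ i, ∑ j, ∑ α, F α i j := by
  calc (∑ α, ∑ i, ∑ j, F α i j) = ∑ i, ∑ α, ∑ j, F α i j := Finset.sum_comm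
    _ = ∑ i, ∑ j, ∑ α, F α i j := Finset.sum_congr rfl (fun i _ => Finset.sum_comm)

/-- Lu's inequality: `B α` plays the role of `A_{α+2}` in the classical statement. -/
theorem lu_inequality (n m : ℕ) (hm : 0 < m)
    (A : Matrix (Fin n) (Fin n) ℝ) (hdiag : A.IsDiag)
    (hA : trace (A * Aᵀ) = 1)
    (B : Fin m → Matrix (Fin n) (Fin n) ℝ)
    (hsym : ∀ α, (B α)ᵀ = B α)
    (horth : ∀ α β, α ≠ β → trace (B α * (B β)ᵀ) = 0)
    (hmono : ∀ α β : Fin m, α ≤ β → trace (B β * (B β)ᵀ) ≤ trace (B α * (B α)ᵀ)) :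
    ∑ α, trace ((A * B α - B α * A) * (A * B α - B α * A)ᵀ) ≤
      ∑ α, trace (B α * (B α)ᵀ) + trace (B ⟨0, hm⟩ * (B ⟨0, hm⟩)ᵀ) := by
  classical
  set a : Fin n → ℝ := fun i => A i i with ha
  set e : Fin n → Fin n → ℝ := fun i j => max 0 ((a i - a j)^2 - 1) with he
  -- entrywise symmetry and orthogonality
  have hsym' : ∀ α (k l : Fin n), B α l k = B α k l := by
    intro α k l
    conv_rhs => rw [← hsym α]
    rfl
  have horth' : ∀ α β : Fin m, α ≠ β → ∑ k, ∑ l, B α k l * B β k l = 0 := by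
    intro α β hαβ
    rw [← lu_trace_eq]; exact horth α β hαβ
  -- norms
  set c : Fin m → ℝ := fun α => ∑ k, ∑ l, (B α k l)^2 with hcdef
  have hctr : ∀ α, trace (B α * (B α)ᵀ) = c α := by
    intro α; rw [lu_trace_eq, hcdef]
    exact Finset.sum_congr rfl (fun k _ => Finset.sum_congr rfl (fun l _ => (pow_two _).symm))
  set c1 : ℝ := c ⟨0, hm⟩ with hc1
  have hc10 : 0 ≤ c1 := Finset.sum_nonneg (fun k _ => Finset.sum_nonneg (fun l _ => sq_nonneg _))
  have hcle : ∀ α, c α ≤ c1 := by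
    intro α
    have := hmono ⟨0, hm⟩ α (by simp [Fin.le_def])
    rwa [hctr, hctr] at this
  -- ∑ a² = 1
  have hAsum : ∑ i, (a i)^2 = 1 := by
    rw [← hA, lu_trace_eq]
    refine Finset.sum_congr rfl (fun i _ => ?_)
    rw [Finset.sum_eq_single i (fun j _ hj => by rw [hdiag (Ne.symm hj), mul_zero])
      (fun h => absurd (Finset.mem_univ i) h)]
    simp [ha, pow_two]
  -- commutator entries
  have hcommE : ∀ α (i j : Fin n), (A * B α - B α * A) i j = (a i - a j) * B α i j := by
    intro α i j
    have h1 : (A * B α) i j = a i * B α i j := by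
      rw [Matrix.mul_apply, Finset.sum_eq_single i
        (fun k _ hk => by rw [hdiag (Ne.symm hk), zero_mul])
        (fun h => absurd (Finset.mem_univ i) h)]
    have h2 : (B α * A) i j = a j * B α i j := by
      rw [Matrix.mul_apply, Finset.sum_eq_single j
        (fun k _ hk => by rw [hdiag hk, mul_zero])
        (fun h => absurd (Finset.mem_univ j) h), mul_comm]
    rw [Matrix.sub_apply, h1, h2]; ring
  -- rewrite goal
  have hLHS : ∀ α, trace ((A * B α - B α * A) * (A * B α - B α * A)ᵀ)
      = ∑ i, ∑ j, (a i - a j)^2 * (B α i j)^2 := by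
    intro α
    rw [lu_trace_eq]
    refine Finset.sum_congr rfl (fun i _ => Finset.sum_congr rfl (fun j _ => ?_))
    rw [hcommE α i j]; ring
  simp_rw [hLHS, hctr]
  -- main chain
  have step1 : ∀ α, ∑ i, ∑ j, (a i - a j)^2 * (B α i j)^2
      ≤ c α + ∑ i, ∑ j, e i j * (B α i j)^2 := by
    intro α
    have hpt : ∀ i j, (a i - a j)^2 * (B α i j)^2
        ≤ (B α i j)^2 + e i j * (B α i j)^2 := by
      intro i j
      have hb : (a i - a j)^2 ≤ 1 + e i j := by
        rw [he]; simp only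
        linarith [le_max_right (0:ℝ) ((a i - a j)^2 - 1)]
      nlinarith [sq_nonneg (B α i j), mul_le_mul_of_nonneg_right hb (sq_nonneg (B α i j))]
    calc ∑ i, ∑ j, (a i - a j)^2 * (B α i j)^2
        ≤ ∑ i, ∑ j, ((B α i j)^2 + e i j * (B α i j)^2) :=
          Finset.sum_le_sum (fun i _ => Finset.sum_le_sum (fun j _ => hpt i j))
      _ = c α + ∑ i, ∑ j, e i j * (B α i j)^2 := by
          rw [hcdef]
          simp only
          rw [← Finset.sum_add_distrib]
          exact Finset.sum_congr rfl (fun i _ => Finset.sum_add_distrib)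
  have step2 : ∑ α, ∑ i, ∑ j, e i j * (B α i j)^2 ≤ c1 := by
    have hswap : (∑ α, ∑ i, ∑ j, e i j * (B α i j)^2)
        = ∑ i, ∑ j, e i j * ∑ α, (B α i j)^2 := by
      rw [lu_comm3 (fun α i j => e i j * (B α i j)^2)]
      exact Finset.sum_congr rfl (fun i _ => Finset.sum_congr rfl
        (fun j _ => (Finset.mul_sum _ _ _).symm))
    rw [hswap]
    have hb : ∀ i j : Fin n, e i j * (∑ α, (B α i j)^2) ≤ e i j * (c1 / 2) := by
      intro i j
      rcases eq_or_ne i j with rfl | hij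
      · have : e i i = 0 := by rw [he]; simp
        rw [this, zero_mul, zero_mul]
      · have hbessel := bessel B hsym' horth' c1 hc10 hcle i j hij
        exact mul_le_mul_of_nonneg_left hbessel (le_max_left _ _)
    calc ∑ i, ∑ j, e i j * ∑ α, (B α i j)^2
        ≤ ∑ i, ∑ j, e i j * (c1 / 2) :=
          Finset.sum_le_sum (fun i _ => Finset.sum_le_sum (fun j _ => hb i j))
      _ = (∑ i, ∑ j, e i j) * (c1 / 2) := by
          rw [Finset.sum_mul]
          exact Finset.sum_congr rfl (fun i _ => (Finset.sum_mul _ _ _).symm)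
      _ ≤ 2 * (c1 / 2) :=
          mul_le_mul_of_nonneg_right (scalar a hAsum.le) (by linarith)
      _ = c1 := by ring
  calc ∑ α, ∑ i, ∑ j, (a i - a j)^2 * (B α i j)^2
      ≤ ∑ α, (c α + ∑ i, ∑ j, e i j * (B α i j)^2) :=
        Finset.sum_le_sum (fun α _ => step1 α)
    _ = ∑ α, c α + ∑ α, ∑ i, ∑ j, e i j * (B α i j)^2 := Finset.sum_add_distrib
    _ ≤ ∑ α, c α + c1 := by linarith [step2]
end

section
/- For any complex n×n matrix X with ‖X‖ = 1, each positive eigenvalue of the operator T_X(Y) = [X*,[X,Y]] occurs with even multiplicity: if the eigenvalues are listed in decreasing order λ₁ ≥ λ₂ ≥ …, then λ_{2i-1}(T_X) = λ_{2i}(T_X) whenever λ_{2i-1}(T_X) > 0. -/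
open Matrix

/-- The operator `T_X (Y) = [X*, [X, Y]]`. -/
noncomputable def TX {n : ℕ} (X Y : Matrix (Fin n) (Fin n) ℂ) : Matrix (Fin n) (Fin n) ℂ :=
  Xᴴ * (X * Y - Y * X) - (X * Y - Y * X) * Xᴴ

noncomputable def TXlm {n : ℕ} (X : Matrix (Fin n) (Fin n) ℂ) :
    Matrix (Fin n) (Fin n) ℂ →ₗ[ℂ] Matrix (Fin n) (Fin n) ℂ where
  toFun := TX X
  map_add' Y Z := by
    simp only [TX, mul_add, add_mul, mul_sub, sub_mul]
    abel
  map_smul' c Y := by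
    simp only [TX, RingHom.id_apply, Matrix.mul_smul, ← smul_sub, mul_smul_comm,
      smul_mul_assoc]

lemma TXlm_apply {n : ℕ} (X Y : Matrix (Fin n) (Fin n) ℂ) : TXlm X Y = TX X Y := rfl

lemma orth_linearIndependent {n N : ℕ} (V : Fin N → Matrix (Fin n) (Fin n) ℂ)
    (horth : ∀ i j, trace (V i * (V j)ᴴ) = if i = j then 1 else 0) :
    LinearIndependent ℂ V := by
  rw [Fintype.linearIndependent_iff]
  intro g hg i
  have h := congrArg (fun W => trace (W * (V i)ᴴ)) hg
  simp only [Finset.sum_mul, Matrix.smul_mul, trace_sum, trace_smul, horth, smul_eq_mul,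
    mul_ite, mul_one, mul_zero, Finset.sum_ite_eq', Finset.mem_univ, if_true,
    Matrix.zero_mul, trace_zero] at h
  exact h

lemma block_card_even {n : ℕ} (X : Matrix (Fin n) (Fin n) ℂ)
    (μ : Fin (n * n) → ℝ) (V : Fin (n * n) → Matrix (Fin n) (Fin n) ℂ)
    (horth : ∀ i j, trace (V i * (V j)ᴴ) = if i = j then 1 else 0)
    (heig : ∀ i, TX X (V i) = (μ i : ℂ) • V i)
    (lam : ℝ) (hlam : lam ≠ 0) :
    Even (Finset.univ.filter (fun j => μ j = lam)).card := by
  classical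
  set B := Finset.univ.filter (fun j => μ j = lam) with hBdef
  by_contra hodd
  rw [Nat.not_even_iff_odd] at hodd
  have hBne : B.Nonempty := Finset.card_pos.mp hodd.pos
  haveI : Nonempty (Fin (n * n)) := ⟨hBne.choose⟩
  -- the Gram matrix of the symplectic form ω(Y,Z) = tr([X,Y]Z) on the eigenvalue block
  set Ω : Matrix B B ℂ :=
    fun j k => trace ((X * V j.1 - V j.1 * X) * V k.1) with hΩdef
  have hskew : Ωᵀ = -Ω := by
    ext j k
    simp only [transpose_apply, Matrix.neg_apply]
    simp only [hΩdef, sub_mul, trace_sub]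
    rw [trace_mul_cycle X (V k.1) (V j.1), trace_mul_cycle (V k.1) X (V j.1),
      trace_mul_cycle (V j.1) (V k.1) X]
    ring
  have hdet : Ω.det = 0 := by
    have h1 : Ω.det = -Ω.det := by
      conv_lhs => rw [← det_transpose, hskew]
      rw [det_neg, Fintype.card_coe, hodd.neg_one_pow]
      ring
    linear_combination (norm := ring1) ((1:ℂ)/2) * h1
  obtain ⟨v, hv0, hvΩ⟩ := Matrix.exists_mulVec_eq_zero_iff.mpr hdet
  set Y : Matrix (Fin n) (Fin n) ℂ := ∑ k : B, v k • V k.1 with hYdef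
  have hμB : ∀ k : B, μ k.1 = lam := fun k => (Finset.mem_filter.mp k.2).2
  have hYeig : TX X Y = (lam : ℂ) • Y := by
    rw [← TXlm_apply, hYdef, map_sum, Finset.smul_sum]
    refine Finset.sum_congr rfl fun k _ => ?_
    rw [_root_.map_smul, TXlm_apply, heig, hμB k, smul_comm]
  -- the partner Z of Y
  set Z : Matrix (Fin n) (Fin n) ℂ := (X * Y - Y * X)ᴴ with hZdef
  have hZ1 : X * Z - Z * X = -((lam : ℂ) • Yᴴ) := by
    have e2 : Xᴴ * (X * Y - Y * X) - (X * Y - Y * X) * Xᴴ = (lam : ℂ) • Y := hYeig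
    have e1 : Z * X - X * Z = (lam : ℂ) • Yᴴ := by
      have := congrArg conjTranspose e2
      simpa only [conjTranspose_sub, conjTranspose_mul, conjTranspose_conjTranspose,
        conjTranspose_smul, Complex.star_def, Complex.conj_ofReal, hZdef] using this
    rw [← e1]; abel
  have hZeig : TX X Z = (lam : ℂ) • Z := by
    unfold TX
    rw [hZ1, hZdef]
    simp only [mul_neg, neg_mul, mul_smul_comm, smul_mul_assoc, conjTranspose_sub,
      conjTranspose_mul, smul_sub]
    abel
  -- expand Z in the orthonormal eigenbasis
  have hind : LinearIndependent ℂ V := orth_linearIndependent V horth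
  have hcard : Fintype.card (Fin (n * n)) = Module.finrank ℂ (Matrix (Fin n) (Fin n) ℂ) := by
    simp [Module.finrank_matrix]
  let b : Module.Basis (Fin (n * n)) ℂ (Matrix (Fin n) (Fin n) ℂ) :=
    basisOfLinearIndependentOfCardEqFinrank hind hcard
  have hb : ⇑b = V := coe_basisOfLinearIndependentOfCardEqFinrank hind hcard
  set d : Fin (n * n) → ℂ := fun m => b.repr Z m with hddef
  have hrep : Z = ∑ m, d m • V m := by
    conv_lhs => rw [← b.sum_repr Z]
    simp [hb, hddef]
  have hdkill : ∀ m, μ m ≠ lam → d m = 0 := by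
    intro m hm
    have hsum : ∑ j, (d j * (μ j : ℂ) - (lam : ℂ) * d j) • V j = 0 := by
      have e1 : TX X Z = ∑ j, (d j * (μ j : ℂ)) • V j := by
        rw [← TXlm_apply]
        conv_lhs => rw [hrep]
        rw [map_sum]
        refine Finset.sum_congr rfl fun j _ => ?_
        rw [_root_.map_smul, TXlm_apply, heig, smul_smul]
      have e2 : TX X Z = ∑ j, ((lam : ℂ) * d j) • V j := by
        rw [hZeig]
        conv_lhs => rw [hrep]
        rw [Finset.smul_sum]
        exact Finset.sum_congr rfl fun j _ => (smul_smul _ _ _)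
      simp only [sub_smul, Finset.sum_sub_distrib, ← e1, ← e2, sub_self]
    have := Fintype.linearIndependent_iff.mp hind _ hsum m
    have hne : ((μ m : ℂ) - (lam : ℂ)) ≠ 0 := by
      simpa [sub_eq_zero, Complex.ofReal_inj] using hm
    have : d m * ((μ m : ℂ) - (lam : ℂ)) = 0 := by linear_combination this
    exact (mul_eq_zero.mp this).resolve_right hne
  have hZsum : Z = ∑ m ∈ B, d m • V m := by
    rw [hrep]
    refine (Finset.sum_subset (Finset.subset_univ B) fun x _ hx => ?_).symm
    have : μ x ≠ lam := by
      intro hmu; exact hx (by simp [hBdef, hmu])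
    rw [hdkill x this, zero_smul]
  -- ω(Z, Y) = 0 from Ω v = 0
  have homega : trace ((X * Z - Z * X) * Y) = 0 := by
    have hXZ : X * Z - Z * X = ∑ m ∈ B, d m • (X * V m - V m * X) := by
      conv_lhs => rw [hZsum]
      rw [Finset.mul_sum, Finset.sum_mul, ← Finset.sum_sub_distrib]
      exact Finset.sum_congr rfl fun m _ => by
        rw [mul_smul_comm, smul_mul_assoc, smul_sub]
    rw [hXZ, Finset.sum_mul, trace_sum, ← Finset.sum_attach B
      (fun m => trace ((d m • (X * V m - V m * X)) * Y))]
    refine Finset.sum_eq_zero fun m _ => ?_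
    have hrow := congrFun hvΩ m
    simp only [Matrix.mulVec, dotProduct, hΩdef, Pi.zero_apply] at hrow
    rw [smul_mul_assoc, trace_smul, hYdef, Finset.mul_sum]
    simp only [mul_smul_comm, trace_sum, trace_smul, smul_eq_mul]
    rw [show ∑ k : B, v k * trace ((X * V m.1 - V m.1 * X) * V k.1)
        = ∑ k : B, trace ((X * V m.1 - V m.1 * X) * V k.1) * v k from
      Finset.sum_congr rfl fun k _ => mul_comm _ _, hrow, mul_zero]
  -- but also ω(Z, Y) = -lam * ⟨Y, Y⟩ ≠ 0
  have hneg : trace ((X * Z - Z * X) * Y) = -((lam : ℂ) * trace (Yᴴ * Y)) := by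
    rw [hZ1]
    simp [Matrix.smul_mul, trace_smul]
  have htrY : trace (Yᴴ * Y) = ∑ k : B, v k * star (v k) := by
    rw [trace_mul_comm, hYdef]
    simp only [conjTranspose_sum, conjTranspose_smul, Finset.mul_sum, Finset.sum_mul,
      smul_mul_assoc, mul_smul_comm, trace_sum, trace_smul, smul_eq_mul, horth,
      Subtype.coe_inj, mul_ite, mul_one, mul_zero, Finset.sum_ite_eq, Finset.sum_ite_eq',
      Finset.mem_attach, Finset.mem_univ, if_true]
    exact Finset.sum_congr rfl fun k _ => mul_comm _ _
  have hsum0 : ∑ k : B, v k * star (v k) = 0 := by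
    rw [homega, htrY] at hneg
    have hl : (lam : ℂ) ≠ 0 := by simpa using hlam
    have h0 : (lam : ℂ) * ∑ k : B, v k * star (v k) = 0 := neg_eq_zero.mp hneg.symm
    exact (mul_eq_zero.mp h0).resolve_left hl
  have hre : ∑ k : B, Complex.normSq (v k) = 0 := by
    have h1 : ∑ k : B, (Complex.normSq (v k) : ℂ) = 0 := by
      simpa only [Complex.star_def, Complex.mul_conj] using hsum0
    rw [← Complex.ofReal_sum] at h1
    exact_mod_cast h1
  apply hv0
  funext k
  have := (Finset.sum_eq_zero_iff_of_nonneg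
    (fun k _ => Complex.normSq_nonneg (v k))).mp hre k (Finset.mem_univ k)
  simpa using Complex.normSq_eq_zero.mp this

/-- Every positive eigenvalue of `T_X` has even multiplicity: with eigenvalues `μ` listed in
decreasing order (via an orthonormal eigenbasis `V` of `M(n,ℂ)`), consecutive
even/odd-indexed eigenvalues agree whenever positive. -/
theorem TX_even_multiplicity (n : ℕ)
    (X : Matrix (Fin n) (Fin n) ℂ) (hX : (trace (X * Xᴴ)).re = 1)
    (μ : Fin (n * n) → ℝ) (hmono : Antitone μ)
    (V : Fin (n * n) → Matrix (Fin n) (Fin n) ℂ)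
    (horth : ∀ i j, trace (V i * (V j)ᴴ) = if i = j then 1 else 0)
    (heig : ∀ i, TX X (V i) = (μ i : ℂ) • V i) :
    ∀ (i : ℕ) (h : 2 * i + 1 < n * n),
      0 < μ ⟨2 * i, by omega⟩ → μ ⟨2 * i, by omega⟩ = μ ⟨2 * i + 1, h⟩ := by
  intro i
  induction i using Nat.strong_induction_on with
  | _ i IH =>
    intro h hpos
    by_contra hne
    classical
    set m : Fin (n * n) := ⟨2 * i, by omega⟩ with hmdef
    set lam : ℝ := μ m with hlamdef
    have hlt : μ ⟨2 * i + 1, h⟩ < lam :=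
      lt_of_le_of_ne (hmono (by rw [Fin.le_def]; simp [hmdef])) fun e => hne e.symm
    have heven := block_card_even X μ V horth heig lam (ne_of_gt hpos)
    set B := Finset.univ.filter (fun j => μ j = lam) with hBdef
    have hmB : m ∈ B := by simp [hBdef, hlamdef]
    have hBne : B.Nonempty := ⟨m, hmB⟩
    set a := B.min' hBne with hadef
    have haB : a ∈ B := B.min'_mem hBne
    have hμa : μ a = lam := (Finset.mem_filter.mp haB).2
    have ham : a ≤ m := B.min'_le m hmB
    have hBIcc : B = Finset.Icc a m := by
      ext j
      simp only [Finset.mem_Icc, hBdef, Finset.mem_filter, Finset.mem_univ, true_and]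
      constructor
      · intro hj
        refine ⟨B.min'_le j (by simp [hBdef, hj]), ?_⟩
        by_contra hjm
        push_neg at hjm
        have hj2 : 2 * i < j.val := hjm
        have h1 : (⟨2 * i + 1, h⟩ : Fin (n * n)) ≤ j := by
          show 2 * i + 1 ≤ j.val
          omega
        have := hmono h1
        rw [hj] at this
        exact absurd this (not_le.mpr hlt)
      · rintro ⟨h1, h2⟩
        have hu : μ j ≤ lam := hμa ▸ hmono h1
        have hl2 : lam ≤ μ j := hmono h2
        linarith
    have hcard : B.card = 2 * i + 1 - a.val := by
      rw [hBIcc, Fin.card_Icc]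
    have hale : a.val ≤ 2 * i := Fin.le_def.mp ham
    have haodd : a.val % 2 = 1 := by
      rw [hcard] at heven
      rw [Nat.even_iff] at heven
      omega
    obtain ⟨k, hk⟩ : ∃ k, a.val = 2 * k + 1 := ⟨a.val / 2, by omega⟩
    have hklt : k < i := by omega
    have h2k1 : 2 * k + 1 < n * n := by have := a.isLt; omega
    have hka : (⟨2 * k + 1, h2k1⟩ : Fin (n * n)) = a := by
      apply Fin.ext; simp [hk]
    have hμk1 : μ ⟨2 * k + 1, h2k1⟩ = lam := by rw [hka]; exact hμa
    have hge : lam ≤ μ ⟨2 * k, by omega⟩ := by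
      rw [← hμk1]
      exact hmono (by show 2 * k ≤ 2 * k + 1; omega)
    have heq := IH k hklt h2k1 (lt_of_lt_of_le hpos hge)
    have hmem : (⟨2 * k, by omega⟩ : Fin (n * n)) ∈ B := by
      simp only [hBdef, Finset.mem_filter, Finset.mem_univ, true_and]
      rw [heq, hμk1]
    have hfin : a.val ≤ 2 * k := B.min'_le _ hmem
    omega
end

section
/- For any two quaternionic n×n matrices X and Y, the squared Frobenius norm of the commutator satisfies ‖[X,Y]‖² ≤ 4‖X‖²‖Y‖², and this constant 4 is attained by X = i·I₁ and Y = j·I₁ (the 1×1 matrices i and j). -/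
open Matrix Quaternion

open Finset

attribute [local instance] Matrix.frobeniusSeminormedAddCommGroup

lemma re_sum {ι : Type*} (s : Finset ι) (f : ι → ℍ[ℝ]) :
    (∑ i ∈ s, f i).re = ∑ i ∈ s, (f i).re :=
  map_sum (⟨⟨QuaternionAlgebra.re, rfl⟩, fun _ _ => rfl⟩ : ℍ[ℝ] →+ ℝ) f s

lemma trace_re_eq {n : ℕ} (X : Matrix (Fin n) (Fin n) ℍ[ℝ]) :
    (trace (X * Xᴴ)).re = ‖X‖ ^ 2 := by
  rw [Matrix.frobenius_norm_def]
  rw [← Real.rpow_natCast _ 2, ← Real.rpow_mul (by positivity)]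
  norm_num
  simp only [Matrix.trace, Matrix.diag, Matrix.mul_apply, Matrix.conjTranspose_apply,
    Quaternion.self_mul_star]
  simp [re_sum, Quaternion.normSq_eq_norm_mul_self, sq]

lemma norm_sq_eq {n : ℕ} (X : Matrix (Fin n) (Fin n) ℍ[ℝ]) :
    ‖X‖ ^ 2 = ∑ i, ∑ j, ‖X i j‖ ^ 2 := by
  rw [← trace_re_eq]
  simp only [Matrix.trace, Matrix.diag, Matrix.mul_apply, Matrix.conjTranspose_apply,
    Quaternion.self_mul_star]
  simp [re_sum, Quaternion.normSq_eq_norm_mul_self, sq]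

lemma mul_norm_le {n : ℕ} (A B : Matrix (Fin n) (Fin n) ℍ[ℝ]) :
    ‖A * B‖ ^ 2 ≤ ‖A‖ ^ 2 * ‖B‖ ^ 2 := by
  rw [norm_sq_eq, norm_sq_eq A, norm_sq_eq B]
  calc ∑ i, ∑ j, ‖(A * B) i j‖ ^ 2
      ≤ ∑ i, ∑ j, (∑ k, ‖A i k‖ ^ 2) * (∑ k, ‖B k j‖ ^ 2) := by
        refine Finset.sum_le_sum fun i _ => Finset.sum_le_sum fun j _ => ?_
        calc ‖(A * B) i j‖ ^ 2 ≤ (∑ k, ‖A i k‖ * ‖B k j‖) ^ 2 := by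
              have h : ‖(A * B) i j‖ ≤ ∑ k, ‖A i k‖ * ‖B k j‖ := by
                rw [Matrix.mul_apply]
                exact (norm_sum_le _ _).trans (le_of_eq (by simp [norm_mul]))
              exact pow_le_pow_left₀ (norm_nonneg _) h 2
          _ ≤ (∑ k, ‖A i k‖ ^ 2) * (∑ k, ‖B k j‖ ^ 2) :=
              Finset.sum_mul_sq_le_sq_mul_sq _ _ _
    _ = (∑ i, ∑ k, ‖A i k‖ ^ 2) * (∑ k, ∑ j, ‖B k j‖ ^ 2) := by
        rw [← Finset.sum_mul_sum]
        congr 1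
        rw [Finset.sum_comm]

/-- BW-type inequality for quaternionic matrices, with sharpness of the constant 4,
attained by the 1×1 matrices `i` and `j`. -/
theorem bw_quaternion :
    (∀ (n : ℕ) (X Y : Matrix (Fin n) (Fin n) ℍ[ℝ]),
        (trace ((X * Y - Y * X) * (X * Y - Y * X)ᴴ)).re ≤
          4 * (trace (X * Xᴴ)).re * (trace (Y * Yᴴ)).re) ∧
    (let X : Matrix (Fin 1) (Fin 1) ℍ[ℝ] := fun _ _ => (⟨0, 1, 0, 0⟩ : ℍ[ℝ])
     let Y : Matrix (Fin 1) (Fin 1) ℍ[ℝ] := fun _ _ => (⟨0, 0, 1, 0⟩ : ℍ[ℝ])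
     (trace ((X * Y - Y * X) * (X * Y - Y * X)ᴴ)).re =
       4 * (trace (X * Xᴴ)).re * (trace (Y * Yᴴ)).re) := by
  constructor
  · intro n X Y
    rw [trace_re_eq, trace_re_eq, trace_re_eq]
    have htri : ‖X * Y - Y * X‖ ≤ ‖X * Y‖ + ‖Y * X‖ := norm_sub_le _ _
    have h1 := mul_norm_le X Y
    have h2 := mul_norm_le Y X
    nlinarith [norm_nonneg (X * Y), norm_nonneg (Y * X), norm_nonneg (X * Y - Y * X),
      sq_nonneg (‖X * Y‖ - ‖Y * X‖)]
  · intro X Y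
    simp only [Matrix.trace, Matrix.diag, Matrix.mul_apply, Matrix.conjTranspose_apply,
      Matrix.sub_apply]
    simp only [Fin.sum_univ_one, Quaternion.re_mul, Quaternion.imI_mul, Quaternion.imJ_mul,
      Quaternion.imK_mul, Quaternion.re_star, Quaternion.imI_star, Quaternion.imJ_star,
      Quaternion.imK_star, Quaternion.re_sub, Quaternion.imI_sub, Quaternion.imJ_sub,
      Quaternion.imK_sub]
    simp [X, Y]
    norm_num
end
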